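/- Let F be any class of reflexive and transitive Kripke frames. If Γ ∪ {α} ⊨^g_F φ and Γ ∪ {β} ⊨^g_F ψ, then Γ ∪ {□α ∨ □β} ⊨^g_F □φ ∨ □ψ. -/
import Mathlib


/-- Formulas of the basic modal language. -/
inductive Form : Type where
  | var : ℕ → Form
  | bot : Form
  | imp : Form → Form → Form
  | box : Form → Form

def Form.neg (φ : Form) : Form := .imp φ .bot
def Form.dia (φ : Form) : Form := .neg (.box (.neg φ))
def Form.or (φ ψ : Form) : Form := .imp (.neg φ) ψ
def Form.and (φ ψ : Form) : Form := .neg (.imp φ (.neg ψ))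

/-- A Kripke frame: a nonempty set of worlds with an accessibility relation. -/
structure Frame : Type 1 where
  W : Type
  R : W → W → Prop
  nonempty : Nonempty W

/-- Truth at a world of a model. -/
def Frame.sat (F : Frame) (V : ℕ → F.W → Prop) : F.W → Form → Prop
  | w, .var n => V n w
  | _, .bot => False
  | w, .imp φ ψ => F.sat V w φ → F.sat V w ψ
  | w, .box φ => ∀ u, F.R w u → F.sat V u φ

/-- Local consequence with respect to a class of frames. -/
def localConseq (C : Frame → Prop) (Γ : Set Form) (φ : Form) : Prop :=
  ∀ F, C F → ∀ V : ℕ → F.W → Prop, ∀ w : F.W,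
    (∀ ψ ∈ Γ, F.sat V w ψ) → F.sat V w φ

/-- Global consequence with respect to a class of frames. -/
def globalConseq (C : Frame → Prop) (Γ : Set Form) (φ : Form) : Prop :=
  ∀ F, C F → ∀ V : ℕ → F.W → Prop,
    (∀ ψ ∈ Γ, ∀ w : F.W, F.sat V w ψ) → ∀ w : F.W, F.sat V w φ

/-- □ⁿφ -/
def boxIter : ℕ → Form → Form
  | 0, φ => φ
  | n+1, φ => .box (boxIter n φ)

/-- ◇ⁿφ -/
def diaIter : ℕ → Form → Form
  | 0, φ => φ
  | n+1, φ => .dia (diaIter n φ)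

/-- □^ωΓ = {□ⁿψ | n ∈ ℕ, ψ ∈ Γ} -/
def boxOmega (Γ : Set Form) : Set Form :=
  {χ | ∃ n ψ, ψ ∈ Γ ∧ χ = boxIter n ψ}

def Frame.gen (F : Frame) (w : F.W) : Frame where
  W := {v : F.W // Relation.ReflTransGen F.R w v}
  R a b := F.R a.1 b.1
  nonempty := ⟨⟨w, Relation.ReflTransGen.refl⟩⟩

/-- A class of frames is closed under point-generated subframes. -/
def closedGen (C : Frame → Prop) : Prop :=
  ∀ F, C F → ∀ w : F.W, C (F.gen w)

/-- Modal-free (purely propositional) formulas. -/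
def modalFree : Form → Prop
  | .var _ => True
  | .bot => True
  | .imp φ ψ => modalFree φ ∧ modalFree ψ
  | .box _ => False

lemma gen_sat (F : Frame) (w : F.W) (V : ℕ → F.W → Prop) :
    ∀ (χ : Form) (v : (F.gen w).W),
      (F.gen w).sat (fun n a => V n a.1) v χ ↔ F.sat V v.1 χ := by
  intro χ
  induction χ with
  | var n => intro v; exact Iff.rfl
  | bot => intro v; exact Iff.rfl
  | imp a b iha ihb =>
      intro v
      constructor
      · intro h ha; exact (ihb v).1 (h ((iha v).2 ha))
      · intro h ha; exact (ihb v).2 (h ((iha v).1 ha))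
  | box a ih =>
      intro v
      constructor
      · intro h u hu
        exact (ih ⟨u, v.2.tail hu⟩).1 (h ⟨u, v.2.tail hu⟩ hu)
      · intro h u hu
        exact (ih u).2 (h u.1 hu)

lemma rtg_sub {F : Frame} (hr : Reflexive F.R) (ht : Transitive F.R)
    {a b : F.W} (h : Relation.ReflTransGen F.R a b) : F.R a b := by
  induction h with
  | refl => exact hr a
  | tail _ h2 ih => exact ht ih h2

/-- the global modal constructive dilemma over reflexive
transitive frames (closed under point-generated subframes). -/
theorem stmt19 (C : Frame → Prop)
    (hrefl : ∀ F, C F → Reflexive F.R)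
    (htrans : ∀ F, C F → Transitive F.R)
    (hgen : closedGen C)
    (Γ : Set Form) (α β φ ψ : Form)
    (h1 : globalConseq C (insert α Γ) φ)
    (h2 : globalConseq C (insert β Γ) ψ) :
    globalConseq C (insert (Form.or (.box α) (.box β)) Γ)
      (Form.or (.box φ) (.box ψ)) := by
  intro F hF V hΓ w
  have hΓ' : ∀ χ ∈ Γ, ∀ v : F.W, F.sat V v χ := fun χ hχ =>
    hΓ χ (Set.mem_insert_of_mem _ hχ)
  have hdisj := hΓ _ (Set.mem_insert _ _) w
  -- key: from □θ at w and global consequence (insert θ Γ) ⊨ ξ, get □ξ at w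
  have key : ∀ θ ξ : Form, globalConseq C (insert θ Γ) ξ →
      F.sat V w (.box θ) → F.sat V w (.box ξ) := by
    intro θ ξ hg hbox u hu
    have hCgen := hgen F hF w
    have hξ : ∀ v : (F.gen w).W, (F.gen w).sat (fun n a => V n a.1) v ξ := by
      apply hg (F.gen w) hCgen
      intro χ hχ v
      rcases Set.mem_insert_iff.1 hχ with h | h
      · subst h
        exact (gen_sat F w V χ v).2
          (hbox v.1 (rtg_sub (hrefl F hF) (htrans F hF) v.2))
      · exact (gen_sat F w V χ v).2 (hΓ' χ h v.1)
    have hu' : Relation.ReflTransGen F.R w u := Relation.ReflTransGen.single hu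
    exact (gen_sat F w V ξ ⟨u, hu'⟩).1 (hξ ⟨u, hu'⟩)
  intro hnφ
  apply key β ψ h2
  apply hdisj
  intro hα
  exact hnφ (key α φ h1 hα)
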